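/- arXiv:2103.05393 — 2 statements merged into one kernel-verified Lean document; each statement's English description precedes it below -/
import Mathlib

section
/- Let g : ℝ² → ℂ be continuous with |g(x,y) − φ(x,y)| < 1/20 for all (x,y) ∈ [−π,π]², and set E = {(x,y) ∈ [−π,π]² : Re g(x,y) = 0}. Then E separates the points (0,0) and (π,−π) in ℝ², i.e., there is no connected subset of ℝ² \ E containing both (0,0) and (π,−π). -/
open Real

/-- The function `φ(x,y) = (1/3)(e^{ix} + e^{iy} + e^{i(x+y)})`. -/
noncomputable def phi : ℝ × ℝ → ℂ := fun p =>
  (1 / 3) * (Complex.exp (Complex.I * p.1) + Complex.exp (Complex.I * p.2) +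
    Complex.exp (Complex.I * (p.1 + p.2)))

lemma phi_re (p : ℝ × ℝ) :
    (phi p).re = (Real.cos p.1 + Real.cos p.2 + Real.cos (p.1 + p.2)) / 3 := by
  simp [phi, Complex.exp_re, Complex.exp_im]
  ring

/-- If `g` is continuous and `|g − φ| < 1/20` on `[−π,π]²`, then the zero set
`E = {(x,y) ∈ [−π,π]² : Re g(x,y) = 0}` separates `(0,0)` from `(π,−π)`: no connected
subset of `ℝ² \ E` contains both points. -/
theorem zero_set_separates (g : ℝ × ℝ → ℂ) (hg : Continuous g)
    (happrox : ∀ p ∈ Set.Icc (-π) π ×ˢ Set.Icc (-π) π,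
      ‖g p - phi p‖ < 1 / 20)
    (E : Set (ℝ × ℝ))
    (hE : E = {p | p ∈ Set.Icc (-π) π ×ˢ Set.Icc (-π) π ∧ (g p).re = 0}) :
    ¬ ∃ F : Set (ℝ × ℝ), F ⊆ Eᶜ ∧ IsConnected F ∧
      ((0 : ℝ), (0 : ℝ)) ∈ F ∧ (π, -π) ∈ F := by
  rintro ⟨F, hFE, hFconn, h0, h1⟩
  have hpi : (0:ℝ) < π := Real.pi_pos
  set Q : Set (ℝ × ℝ) := Set.Icc (-π) π ×ˢ Set.Icc (-π) π with hQ
  -- clamp map into the square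
  set c : ℝ × ℝ → ℝ × ℝ :=
    fun p => (max (-π) (min π p.1), max (-π) (min π p.2)) with hc
  have hcQ : ∀ p, c p ∈ Q := by
    intro p
    constructor <;> constructor
    · exact le_max_left _ _
    · exact max_le (by linarith) (min_le_left _ _)
    · exact le_max_left _ _
    · exact max_le (by linarith) (min_le_left _ _)
  have hcid : ∀ p ∈ Q, c p = p := by
    rintro ⟨x, y⟩ ⟨⟨hx1, hx2⟩, ⟨hy1, hy2⟩⟩
    simp only [hc, Prod.mk.injEq]
    constructor
    · rw [min_eq_right hx2, max_eq_right hx1]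
    · rw [min_eq_right hy2, max_eq_right hy1]
  -- bound on the real part
  have hre : ∀ q ∈ Q, |(g q).re - (phi q).re| < 1 / 20 := by
    intro q hq
    have h1 := Complex.abs_re_le_norm (g q - phi q)
    have h2 := happrox q hq
    simp only [Complex.sub_re] at h1
    calc |(g q).re - (phi q).re| ≤ ‖g q - phi q‖ := h1
      _ < 1 / 20 := h2
  -- the extended function
  set h : ℝ × ℝ → ℝ := fun p => (g (c p)).re with hh
  have hcont : Continuous h := by
    apply (Complex.continuous_re.comp hg).comp
    exact (continuous_const.max (continuous_const.min continuous_fst)).prodMk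
      (continuous_const.max (continuous_const.min continuous_snd))
  -- h never vanishes on F
  have hne : ∀ p ∈ F, h p ≠ 0 := by
    intro p hp hzero
    by_cases hpQ : p ∈ Q
    · -- then p ∈ E, contradiction
      have : p ∈ E := by
        rw [hE]
        refine ⟨hpQ, ?_⟩
        have := hcid p hpQ
        simpa [hh, this] using hzero
      exact hFE hp this
    · -- c p is on the boundary, where Re g < 0
      have hb : c p ∈ Q ∧ ((c p).1 = -π ∨ (c p).1 = π ∨ (c p).2 = -π ∨ (c p).2 = π) := by
        refine ⟨hcQ p, ?_⟩
        have : p.1 ∉ Set.Icc (-π) π ∨ p.2 ∉ Set.Icc (-π) π := by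
          by_contra hcon
          push_neg at hcon
          exact hpQ ⟨hcon.1, hcon.2⟩
        rcases this with hx | hy
        · rw [Set.mem_Icc, not_and_or, not_le, not_le] at hx
          rcases hx with hx | hx
          · left
            simp only [hc]
            rw [min_eq_right (by linarith), max_eq_left (by linarith)]
          · right; left
            simp only [hc]
            rw [min_eq_left (by linarith), max_eq_right (by linarith)]
        · rw [Set.mem_Icc, not_and_or, not_le, not_le] at hy
          rcases hy with hy | hy
          · right; right; left
            simp only [hc]
            rw [min_eq_right (by linarith), max_eq_left (by linarith)]
          · right; right; right
            simp only [hc]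
            rw [min_eq_left (by linarith), max_eq_right (by linarith)]
      obtain ⟨hcpQ, hbd⟩ := hb
      -- Re φ = -1/3 on the boundary
      have key : ∀ a b : ℝ, (a = -π ∨ a = π ∨ b = -π ∨ b = π) →
          (Real.cos a + Real.cos b + Real.cos (a + b)) / 3 = -1 / 3 := by
        rintro a b (rfl | rfl | rfl | rfl) <;>
          simp [Real.cos_add, Real.cos_pi, Real.sin_pi, add_comm]
      have hphi : (phi (c p)).re = -1 / 3 := by
        rw [phi_re]
        exact key _ _ hbd
      have := hre (c p) hcpQ
      rw [hphi] at this
      rw [hh] at hzero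
      simp only at hzero
      rw [hzero] at this
      rw [abs_lt] at this
      linarith
  -- values at the two points
  have hQ0 : ((0:ℝ), (0:ℝ)) ∈ Q := by
    constructor <;> constructor <;> simp <;> linarith
  have hQ1 : ((π:ℝ), -π) ∈ Q := by
    constructor <;> constructor <;> simp <;> linarith
  have hval0 : 0 < h ((0:ℝ), (0:ℝ)) := by
    have hb := hre _ hQ0
    have hphi0 : (phi ((0:ℝ), (0:ℝ))).re = 1 := by
      rw [phi_re]; norm_num
    rw [hphi0, abs_lt] at hb
    have hcid0 := hcid _ hQ0
    rw [hh]
    simp only [hcid0]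
    linarith
  have hval1 : h ((π:ℝ), -π) < 0 := by
    have hb := hre _ hQ1
    have hphi1 : (phi ((π:ℝ), -π)).re = -1 / 3 := by
      rw [phi_re]
      norm_num [Real.cos_pi]
    rw [hphi1, abs_lt] at hb
    have hcid1 := hcid _ hQ1
    rw [hh]
    simp only [hcid1]
    linarith
  -- IVT
  have hsub := hFconn.isPreconnected.intermediate_value h1 h0 hcont.continuousOn
  have : (0:ℝ) ∈ h '' F := hsub ⟨le_of_lt hval1, le_of_lt hval0⟩
  obtain ⟨p, hpF, hp0⟩ := this
  exact hne p hpF hp0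
end

section
/- For every integer d ≥ 2, there exists a probability measure σ on ℝ^d whose characteristic function σ̂ is not the local uniform limit of any sequence of zero-free continuous functions: there is no sequence (f_n) of continuous functions f_n : ℝ^d → ℂ with f_n(p) ≠ 0 for all p, such that f_n → σ̂ uniformly on every compact subset of ℝ^d. -/
open MeasureTheory Filter RealInnerProductSpace Complex Set


/-- A loop `[0,1] → ℂ` admits a continuous logarithm with matching endpoints. -/
def HasLoopLog (φ : ℝ → ℂ) : Prop :=
  ∃ h : ℝ → ℂ, ContinuousOn h (Icc 0 1) ∧ h 0 = h 1 ∧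
    ∀ s ∈ Icc (0:ℝ) 1, φ s = Complex.exp (h s)

lemma hasLoopLog_const {c : ℂ} (hc : c ≠ 0) : HasLoopLog (fun _ => c) :=
  ⟨fun _ => Complex.log c, continuousOn_const, rfl, fun _s _ => (Complex.exp_log hc).symm⟩

lemma HasLoopLog.const_mul {φ : ℝ → ℂ} (h : HasLoopLog φ) {c : ℂ} (hc : c ≠ 0) :
    HasLoopLog (fun s => c * φ s) := by
  obtain ⟨h₀, hcont, hends, hexp⟩ := h
  refine ⟨fun s => Complex.log c + h₀ s, continuousOn_const.add hcont, by simp [hends], ?_⟩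
  intro s hs
  simp only [Complex.exp_add, Complex.exp_log hc]
  rw [hexp s hs]

/-- "Rouché" transfer of loop logarithms. -/
lemma hasLoopLog_iff_of_close {φ ψ : ℝ → ℂ}
    (hφ : ContinuousOn φ (Icc 0 1)) (hψ : ContinuousOn ψ (Icc 0 1))
    (hφl : φ 0 = φ 1) (hψl : ψ 0 = ψ 1)
    (hclose : ∀ s ∈ Icc (0:ℝ) 1, ‖φ s - ψ s‖ < ‖ψ s‖) :
    (HasLoopLog φ ↔ HasLoopLog ψ) := by
  have hψ0 : ∀ s ∈ Icc (0:ℝ) 1, ψ s ≠ 0 := by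
    intro s hs h0
    have := hclose s hs
    rw [h0] at this
    exact absurd this (by simp)
  have hφ0 : ∀ s ∈ Icc (0:ℝ) 1, φ s ≠ 0 := by
    intro s hs h0
    have := hclose s hs
    rw [h0] at this
    simp at this
  set u : ℝ → ℂ := fun s => φ s / ψ s with hu
  have hure : ∀ s ∈ Icc (0:ℝ) 1, 0 < (u s).re := by
    intro s hs
    have h1 : ‖u s - 1‖ < 1 := by
      have heq : ‖φ s / ψ s - 1‖ = ‖φ s - ψ s‖ / ‖ψ s‖ := by
        rw [← norm_div, sub_div, div_self (hψ0 s hs)]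
      show ‖φ s / ψ s - 1‖ < 1
      rw [heq]
      exact (div_lt_one (lt_of_le_of_lt (norm_nonneg _) (hclose s hs))).2 (hclose s hs)
    have h2 : |(u s).re - 1| ≤ ‖u s - 1‖ := by
      simpa using Complex.abs_re_le_norm (u s - 1)
    have h2' : |(u s).re - 1| < 1 := lt_of_le_of_lt h2 h1
    have := abs_lt.1 h2'
    linarith [this.1]
  have hu0 : ∀ s ∈ Icc (0:ℝ) 1, u s ≠ 0 := by
    intro s hs h0
    have := hure s hs
    rw [h0] at this
    simp at this
  have hucont : ContinuousOn u (Icc 0 1) := hφ.div hψ hψ0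
  have hlogcont : ContinuousOn (fun s => Complex.log (u s)) (Icc 0 1) := by
    intro s hs
    exact (hucont s hs).clog (Complex.mem_slitPlane_iff.2 (Or.inl (hure s hs)))
  have huends : u 0 = u 1 := by simp only [hu, hφl, hψl]
  have hexpu : ∀ s ∈ Icc (0:ℝ) 1, Complex.exp (Complex.log (u s)) = u s :=
    fun s hs => Complex.exp_log (hu0 s hs)
  constructor
  · rintro ⟨h₀, hc, he, hx⟩
    refine ⟨fun s => h₀ s - Complex.log (u s), hc.sub hlogcont, by simp [he, huends], ?_⟩
    intro s hs
    rw [Complex.exp_sub, ← hx s hs, hexpu s hs, hu]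
    show ψ s = φ s / (φ s / ψ s)
    rw [div_div_eq_mul_div, mul_div_cancel_left₀ _ (hφ0 s hs)]
  · rintro ⟨h₀, hc, he, hx⟩
    refine ⟨fun s => h₀ s + Complex.log (u s), hc.add hlogcont, by simp [he, huends], ?_⟩
    intro s hs
    rw [Complex.exp_add, ← hx s hs, hexpu s hs, hu]
    field_simp [hψ0 s hs]

noncomputable def eloop (s : ℝ) : ℂ := Complex.exp ((2 * Real.pi * s : ℝ) * Complex.I)

lemma eloop_continuous : Continuous eloop :=
  Complex.continuous_exp.comp
    ((Complex.continuous_ofReal.comp (continuous_const.mul continuous_id)).mul continuous_const)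

lemma eloop_zero : eloop 0 = 1 := by simp [eloop]

lemma eloop_one : eloop 1 = 1 := by
  have : ((2 * Real.pi * (1:ℝ) : ℝ) : ℂ) * Complex.I = 2 * Real.pi * Complex.I := by
    push_cast; ring
  rw [eloop, this, Complex.exp_two_pi_mul_I]

lemma eloop_norm (s : ℝ) : ‖eloop s‖ = 1 := Complex.norm_exp_ofReal_mul_I _

lemma not_hasLoopLog_eloop : ¬ HasLoopLog eloop := by
  rintro ⟨h, hc, he, hx⟩
  have hq : ∀ s ∈ Icc (0:ℝ) 1, ∃ n : ℤ, (h s).im / (2 * Real.pi) - s = n := by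
    intro s hs
    have := (hx s hs).symm
    rw [eloop, Complex.exp_eq_exp_iff_exists_int] at this
    obtain ⟨n, hn⟩ := this
    refine ⟨n, ?_⟩
    have him : (h s).im = 2 * Real.pi * s + n * (2 * Real.pi) := by
      have := congrArg Complex.im hn
      simpa using this
    rw [him]
    have hpi : (2 * Real.pi) ≠ 0 := by positivity
    field_simp
    try ring
  set q : ℝ → ℝ := fun s => (h s).im / (2 * Real.pi) - s with hqdef
  have hqc : ContinuousOn q (Icc 0 1) :=
    ((Complex.continuous_im.comp_continuousOn hc).div_const _).sub continuousOn_id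
  obtain ⟨n0, hn0⟩ := hq 0 (by constructor <;> norm_num)
  obtain ⟨n1, hn1⟩ := hq 1 (by constructor <;> norm_num)
  have hq0 : q 0 = (n0 : ℝ) := hn0
  have hq1 : q 1 = (n1 : ℝ) := hn1
  have hloop : q 1 = q 0 - 1 := by
    simp only [hqdef, he]
    ring
  have hmem : (n0 : ℝ) - 1/2 ∈ Icc (q 1) (q 0) := by
    constructor <;> [skip; skip] <;> linarith [hq0, hq1, hloop]
  obtain ⟨s, hs, hqs⟩ := intermediate_value_Icc' (by norm_num : (0:ℝ) ≤ 1) hqc hmem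
  obtain ⟨n, hn⟩ := hq s hs
  have hn' : q s = (n : ℝ) := hn
  have : (2 * n0 - 1 : ℝ) = 2 * n := by
    rw [hqs] at hn'
    linarith
  have : (2 * n0 - 1 : ℤ) = 2 * n := by exact_mod_cast this
  omega

lemma not_hasLoopLog_const_mul_eloop {c : ℂ} (hc : c ≠ 0) :
    ¬ HasLoopLog (fun s => c * eloop s) := by
  intro H
  apply not_hasLoopLog_eloop
  have := H.const_mul (inv_ne_zero hc)
  simpa [← mul_assoc, inv_mul_cancel₀ hc] using this

lemma hasLoopLog_of_continuous_ne_zero (q : ℂ → ℂ) (hq : Continuous q)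
    (hq0 : ∀ z, q z ≠ 0) (R : ℝ) (hR : 0 ≤ R) :
    HasLoopLog (fun s => q ((R : ℂ) * eloop s)) := by
  set B := Metric.closedBall (0:ℂ) R with hB
  have hBc : IsCompact B := isCompact_closedBall _ _
  have hBne : B.Nonempty := ⟨0, by simp [hB, hR]⟩
  obtain ⟨z0, hz0, hmin⟩ := hBc.exists_isMinOn hBne (hq.norm.continuousOn)
  set m := ‖q z0‖ with hm
  have hm0 : 0 < m := norm_pos_iff.2 (hq0 z0)
  have hminle : ∀ z ∈ B, m ≤ ‖q z‖ := fun z hz => hmin hz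
  have huc := hBc.uniformContinuousOn_of_continuous hq.continuousOn
  rw [Metric.uniformContinuousOn_iff] at huc
  obtain ⟨δ, hδ, hucδ⟩ := huc m hm0
  have hmemB : ∀ u : ℝ, u ∈ Icc 0 R → ∀ s : ℝ, (u : ℂ) * eloop s ∈ B := by
    intro u hu s
    rw [hB, Metric.mem_closedBall, dist_zero_right, norm_mul, eloop_norm, mul_one,
      Complex.norm_real, Real.norm_eq_abs, _root_.abs_of_nonneg hu.1]
    exact hu.2
  have step : ∀ u u' : ℝ, u ∈ Icc 0 R → u' ∈ Icc 0 R → |u - u'| < δ →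
      (HasLoopLog (fun s => q ((u : ℂ) * eloop s)) ↔
        HasLoopLog (fun s => q ((u' : ℂ) * eloop s))) := by
    intro u u' hu hu' hd
    have hcont : ∀ v : ℝ, ContinuousOn (fun s => q ((v : ℂ) * eloop s)) (Icc 0 1) :=
      fun v => (hq.comp (continuous_const.mul eloop_continuous)).continuousOn
    refine hasLoopLog_iff_of_close (hcont u) (hcont u') ?_ ?_ ?_
    · simp [eloop_zero, eloop_one]
    · simp [eloop_zero, eloop_one]
    · intro s hs
      have hdist : dist ((u : ℂ) * eloop s) ((u' : ℂ) * eloop s) < δ := by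
        rw [dist_eq_norm, ← sub_mul, norm_mul, eloop_norm, mul_one, ← Complex.ofReal_sub,
          Complex.norm_real, Real.norm_eq_abs]
        exact hd
      have := hucδ _ (hmemB u hu s) _ (hmemB u' hu' s) hdist
      rw [dist_eq_norm] at this
      exact lt_of_lt_of_le this (hminle _ (hmemB u' hu' s))
  obtain ⟨N, hN⟩ := exists_nat_gt (R / δ)
  have hN0 : 0 < N := by
    rcases Nat.eq_zero_or_pos N with h | h
    · exfalso; rw [h] at hN; simp at hN
      exact absurd hN (not_lt.2 (div_nonneg hR hδ.le))
    · exact h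
  have hN0' : (0:ℝ) < N := by exact_mod_cast hN0
  have hRN : R / N < δ := by
    rw [div_lt_iff₀ hN0']
    calc R = R / δ * δ := by field_simp
    _ < N * δ := by exact mul_lt_mul_of_pos_right hN hδ
    _ = δ * N := by ring
  have key : ∀ k : ℕ, k ≤ N → HasLoopLog (fun s => q (((k : ℝ) * R / N : ℝ) * eloop s)) := by
    intro k
    induction k with
    | zero => intro _; simpa using hasLoopLog_const (hq0 0)
    | succ k ih =>
      intro hk
      have hk' : k ≤ N := Nat.le_of_succ_le hk
      have hmem : ∀ j : ℕ, j ≤ N → ((j : ℝ) * R / N) ∈ Icc (0:ℝ) R := by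
        intro j hj
        constructor
        · positivity
        · rw [div_le_iff₀ hN0']
          have : (j:ℝ) ≤ N := by exact_mod_cast hj
          calc (j:ℝ) * R ≤ N * R := by nlinarith
          _ = R * N := by ring
      have hd : |((k+1 : ℕ) : ℝ) * R / N - (k : ℝ) * R / N| < δ := by
        push_cast
        have : ((k:ℝ)+1) * R / N - (k : ℝ) * R / N = R / N := by field_simp; ring
        rw [this, _root_.abs_of_nonneg (by positivity)]
        exact hRN
      exact (step _ _ (hmem _ hk) (hmem _ hk') hd).2 (ih hk')
  have := key N le_rfl
  have hNR : ((N : ℝ) * R / N : ℝ) = R := by field_simp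
  rwa [hNR] at this

section Model

open Real

lemma sqrt3_bounds : 1.7 ≤ Real.sqrt 3 ∧ Real.sqrt 3 ≤ 2 := by
  have h3 : Real.sqrt 3 ^ 2 = 3 := Real.sq_sqrt (by norm_num)
  have h0 : 0 ≤ Real.sqrt 3 := Real.sqrt_nonneg 3
  constructor <;> nlinarith

lemma expA_eq : Complex.exp (Complex.I * ((2 * Real.pi / 3 : ℝ) : ℂ)) =
    (-1 + (Real.sqrt 3 : ℂ) * Complex.I) / 2 := by
  rw [mul_comm, Complex.exp_mul_I]
  have hc : Real.cos (2 * Real.pi / 3) = -(1/2) := by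
    have : 2 * Real.pi / 3 = Real.pi - Real.pi / 3 := by ring
    rw [this, Real.cos_pi_sub, Real.cos_pi_div_three]
  have hs : Real.sin (2 * Real.pi / 3) = Real.sqrt 3 / 2 := by
    have : 2 * Real.pi / 3 = Real.pi - Real.pi / 3 := by ring
    rw [this, Real.sin_pi_sub, Real.sin_pi_div_three]
  rw [← Complex.ofReal_cos, ← Complex.ofReal_sin, hc, hs]
  push_cast
  ring

lemma expA'_eq : Complex.exp (Complex.I * ((-(2 * Real.pi / 3) : ℝ) : ℂ)) =
    (-1 - (Real.sqrt 3 : ℂ) * Complex.I) / 2 := by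
  rw [mul_comm, Complex.exp_mul_I]
  have hc : Real.cos (-(2 * Real.pi / 3)) = -(1/2) := by
    rw [Real.cos_neg]
    have : 2 * Real.pi / 3 = Real.pi - Real.pi / 3 := by ring
    rw [this, Real.cos_pi_sub, Real.cos_pi_div_three]
  have hs : Real.sin (-(2 * Real.pi / 3)) = -(Real.sqrt 3 / 2) := by
    rw [Real.sin_neg]
    have : 2 * Real.pi / 3 = Real.pi - Real.pi / 3 := by ring
    rw [this, Real.sin_pi_sub, Real.sin_pi_div_three]
  rw [← Complex.ofReal_cos, ← Complex.ofReal_sin, hc, hs]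
  push_cast
  ring

/-- The key pointwise estimate: near the zero of `1 + e^{i(2π/3+P)} + e^{i(-2π/3+Q)}`,
this function is within `6|z|²` of the model `-√3·z`. -/
lemma key_estimate (z : ℂ) (hz : ‖z‖ ≤ 1/10) :
    ‖(1 + Complex.exp (Complex.I * ((2 * Real.pi / 3 + (z.re + Real.sqrt 3 * z.im) : ℝ) : ℂ))
        + Complex.exp (Complex.I * ((-(2 * Real.pi / 3) + (-z.re + Real.sqrt 3 * z.im) : ℝ) : ℂ)))
      - (-(Real.sqrt 3 : ℂ) * z)‖ ≤ 6 * ‖z‖ ^ 2 := by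
  obtain ⟨hs17, hs2⟩ := sqrt3_bounds
  have hs0 : (0:ℝ) ≤ Real.sqrt 3 := by linarith
  set P : ℝ := z.re + Real.sqrt 3 * z.im with hP
  set Q : ℝ := -z.re + Real.sqrt 3 * z.im with hQ
  have hre : |z.re| ≤ 1/10 := (Complex.abs_re_le_norm z).trans hz
  have him : |z.im| ≤ 1/10 := (Complex.abs_im_le_norm z).trans hz
  have hre' := abs_le.1 hre
  have him' := abs_le.1 him
  have hPle : |P| ≤ 1 := by
    rw [hP, abs_le]; constructor <;> nlinarith
  have hQle : |Q| ≤ 1 := by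
    rw [hQ, abs_le]; constructor <;> nlinarith
  have hsplitU : Complex.exp (Complex.I * ((2 * Real.pi / 3 + P : ℝ) : ℂ)) =
      Complex.exp (Complex.I * ((2 * Real.pi / 3 : ℝ) : ℂ)) * Complex.exp (Complex.I * (P : ℂ)) := by
    rw [← Complex.exp_add, Complex.ofReal_add, mul_add]
  have hsplitV : Complex.exp (Complex.I * ((-(2 * Real.pi / 3) + Q : ℝ) : ℂ)) =
      Complex.exp (Complex.I * ((-(2 * Real.pi / 3) : ℝ) : ℂ)) * Complex.exp (Complex.I * (Q : ℂ)) := by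
    rw [← Complex.exp_add, Complex.ofReal_add, mul_add]
  rw [hsplitU, hsplitV]
  set A : ℂ := Complex.exp (Complex.I * ((2 * Real.pi / 3 : ℝ) : ℂ)) with hA
  set A' : ℂ := Complex.exp (Complex.I * ((-(2 * Real.pi / 3) : ℝ) : ℂ)) with hA'
  set eP : ℂ := Complex.exp (Complex.I * (P : ℂ)) with heP
  set eQ : ℂ := Complex.exp (Complex.I * (Q : ℂ)) with heQ
  have hident : (1 + A * eP + A' * eQ) - (-(Real.sqrt 3 : ℂ) * z) =
      A * (eP - 1 - Complex.I * (P : ℂ)) + A' * (eQ - 1 - Complex.I * (Q : ℂ)) := by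
    have h1 : Complex.I ^ 2 = -1 := Complex.I_sq
    have hzz : ((z.re : ℂ)) + (z.im : ℂ) * Complex.I = z := Complex.re_add_im z
    have hPc : ((P : ℝ) : ℂ) = (z.re : ℂ) + (Real.sqrt 3 : ℂ) * (z.im : ℂ) := by
      rw [hP]; push_cast; ring
    have hQc : ((Q : ℝ) : ℂ) = -(z.re : ℂ) + (Real.sqrt 3 : ℂ) * (z.im : ℂ) := by
      rw [hQ]; push_cast; ring
    rw [hA, hA', expA_eq, expA'_eq, hPc, hQc]
    linear_combination ((Real.sqrt 3 : ℂ) * (z.re : ℂ)) * h1 + (-(Real.sqrt 3 : ℂ)) * hzz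
  rw [hident]
  have hnormA : ‖A‖ = 1 := by
    rw [hA, mul_comm]
    exact Complex.norm_exp_ofReal_mul_I _
  have hnormA' : ‖A'‖ = 1 := by
    rw [hA', mul_comm]
    exact Complex.norm_exp_ofReal_mul_I _
  have hrho : ∀ x : ℝ, |x| ≤ 1 → ‖Complex.exp (Complex.I * (x : ℂ)) - 1 - Complex.I * (x : ℂ)‖ ≤ x ^ 2 := by
    intro x hx
    have habs : ‖Complex.I * (x : ℂ)‖ = |x| := by
      rw [norm_mul, Complex.norm_I, one_mul, Complex.norm_real, Real.norm_eq_abs]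
    have := Complex.norm_exp_sub_one_sub_id_le (x := Complex.I * (x : ℂ)) (by rw [habs]; exact hx)
    rw [habs] at this
    calc ‖Complex.exp (Complex.I * (x : ℂ)) - 1 - Complex.I * (x : ℂ)‖
        ≤ |x| ^ 2 := this
      _ = x ^ 2 := sq_abs x
  have h3 : Real.sqrt 3 ^ 2 = 3 := Real.sq_sqrt (by norm_num)
  have habsz : ‖z‖ ^ 2 = z.re ^ 2 + z.im ^ 2 := by
    rw [Complex.sq_norm, Complex.normSq_apply]; ring
  calc ‖A * (eP - 1 - Complex.I * (P : ℂ)) + A' * (eQ - 1 - Complex.I * (Q : ℂ))‖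
      ≤ ‖A * (eP - 1 - Complex.I * (P : ℂ))‖ + ‖A' * (eQ - 1 - Complex.I * (Q : ℂ))‖ :=
        norm_add_le _ _
    _ = ‖eP - 1 - Complex.I * (P : ℂ)‖ + ‖eQ - 1 - Complex.I * (Q : ℂ)‖ := by
        rw [norm_mul, norm_mul, hnormA, hnormA', one_mul, one_mul]
    _ ≤ P ^ 2 + Q ^ 2 := add_le_add (hrho P hPle) (hrho Q hQle)
    _ ≤ 6 * ‖z‖ ^ 2 := by
        rw [habsz, hP, hQ]; nlinarith [sq_nonneg z.re, sq_nonneg z.im]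

end Model

section Geometry

variable {d : ℕ}

noncomputable def Uvec (i0 i1 : Fin d) : EuclideanSpace ℝ (Fin d) :=
  EuclideanSpace.single i0 (1:ℝ) + EuclideanSpace.single i1 (Real.sqrt 3)

noncomputable def Vvec (i0 i1 : Fin d) : EuclideanSpace ℝ (Fin d) :=
  EuclideanSpace.single i0 (-1:ℝ) + EuclideanSpace.single i1 (Real.sqrt 3)

noncomputable def Phi (i0 i1 : Fin d) : ℂ → EuclideanSpace ℝ (Fin d) := fun z =>
  EuclideanSpace.single i0 (2 * Real.pi / 3 + z.re) + EuclideanSpace.single i1 z.im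

lemma continuous_euclidean_single (i : Fin d) :
    Continuous fun r : ℝ => EuclideanSpace.single i r := by
  have h : ∀ r : ℝ, EuclideanSpace.single i r = r • EuclideanSpace.single i (1:ℝ) := by
    intro r
    ext j
    simp only [EuclideanSpace.single_apply, PiLp.smul_apply, smul_eq_mul]
    split <;> simp
  have h2 : (fun r : ℝ => EuclideanSpace.single i r)
      = fun r : ℝ => r • EuclideanSpace.single i (1:ℝ) := funext h
  rw [h2]
  exact continuous_id.smul continuous_const

lemma phi_continuous (i0 i1 : Fin d) : Continuous (Phi i0 i1) :=
  ((continuous_euclidean_single i0).comp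
    (continuous_const.add Complex.continuous_re)).add
    ((continuous_euclidean_single i1).comp Complex.continuous_im)

lemma inner_phi_U (i0 i1 : Fin d) (hne : i0 ≠ i1) (z : ℂ) :
    (⟪Phi i0 i1 z, Uvec i0 i1⟫ : ℝ) = 2 * Real.pi / 3 + (z.re + Real.sqrt 3 * z.im) := by
  simp only [Phi, Uvec, inner_add_left, inner_add_right,
    EuclideanSpace.inner_single_left, EuclideanSpace.single_apply]
  simp [hne, hne.symm]
  ring

lemma inner_phi_V (i0 i1 : Fin d) (hne : i0 ≠ i1) (z : ℂ) :
    (⟪Phi i0 i1 z, Vvec i0 i1⟫ : ℝ) = -(2 * Real.pi / 3) + (-z.re + Real.sqrt 3 * z.im) := by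
  simp only [Phi, Vvec, inner_add_left, inner_add_right,
    EuclideanSpace.inner_single_left, EuclideanSpace.single_apply]
  simp [hne, hne.symm]
  ring

end Geometry


/-- For every `d ≥ 2` there is a probability measure on `ℝ^d` whose characteristic
function is not the locally uniform limit of any sequence of zero-free continuous
functions. -/
theorem exists_probMeasure_charFun_not_approx (d : ℕ) (hd : 2 ≤ d) :
    ∃ σ : Measure (EuclideanSpace ℝ (Fin d)), IsProbabilityMeasure σ ∧
      ¬ ∃ f : ℕ → EuclideanSpace ℝ (Fin d) → ℂ,
        (∀ n, Continuous (f n)) ∧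
        (∀ n p, f n p ≠ 0) ∧
        (∀ K : Set (EuclideanSpace ℝ (Fin d)), IsCompact K →
          TendstoUniformlyOn f
            (fun t => ∫ z, Complex.exp (Complex.I * (⟪t, z⟫ : ℝ)) ∂σ) atTop K) := by
  classical
  have h0d : 0 < d := by omega
  have h1d : 1 < d := by omega
  set i0 : Fin d := ⟨0, h0d⟩ with hi0
  set i1 : Fin d := ⟨1, h1d⟩ with hi1
  have hne : i0 ≠ i1 := by
    simp [hi0, hi1, Fin.ext_iff]
  set U : EuclideanSpace ℝ (Fin d) := Uvec i0 i1 with hU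
  set V : EuclideanSpace ℝ (Fin d) := Vvec i0 i1 with hV
  set σ : Measure (EuclideanSpace ℝ (Fin d)) :=
    (3:ENNReal)⁻¹ • (Measure.dirac 0 + Measure.dirac U + Measure.dirac V) with hσ
  have hprob : IsProbabilityMeasure σ := by
    constructor
    rw [hσ, Measure.smul_apply, Measure.add_apply, Measure.add_apply]
    simp only [Measure.dirac_apply_of_mem (Set.mem_univ _)]
    rw [show ((1:ENNReal) + 1 + 1) = 3 by norm_num, smul_eq_mul,
      ENNReal.inv_mul_cancel (by norm_num) (by norm_num)]
  refine ⟨σ, hprob, ?_⟩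
  rintro ⟨f, hfc, hf0, hfu⟩
  obtain ⟨hs17, hs2⟩ := sqrt3_bounds
  -- the characteristic function
  have hg : ∀ t : EuclideanSpace ℝ (Fin d),
      (∫ z, Complex.exp (Complex.I * ((⟪t, z⟫ : ℝ) : ℂ)) ∂σ) =
      (1/3 : ℂ) * (1 + Complex.exp (Complex.I * ((⟪t, U⟫ : ℝ) : ℂ))
        + Complex.exp (Complex.I * ((⟪t, V⟫ : ℝ) : ℂ))) := by
    intro t
    have hFc : Continuous fun z : EuclideanSpace ℝ (Fin d) =>
        Complex.exp (Complex.I * ((⟪t, z⟫ : ℝ) : ℂ)) :=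
      Complex.continuous_exp.comp (continuous_const.mul
        (Complex.continuous_ofReal.comp (continuous_const.inner continuous_id)))
    have hint : ∀ c : EuclideanSpace ℝ (Fin d),
        Integrable (fun z => Complex.exp (Complex.I * ((⟪t, z⟫ : ℝ) : ℂ))) (Measure.dirac c) := by
      intro c
      refine (integrable_const (1:ℝ)).mono' hFc.aestronglyMeasurable ?_
      refine Filter.Eventually.of_forall fun z => ?_
      rw [mul_comm, Complex.norm_exp_ofReal_mul_I]
    rw [hσ, integral_smul_measure,
      integral_add_measure ((hint 0).add_measure (hint U)) (hint V),
      integral_add_measure (hint 0) (hint U),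
      integral_dirac, integral_dirac, integral_dirac]
    rw [show (⟪t, (0 : EuclideanSpace ℝ (Fin d))⟫ : ℝ) = 0 from inner_zero_right t,
      Complex.ofReal_zero, mul_zero, Complex.exp_zero]
    rw [ENNReal.toReal_inv]
    norm_num
    try ring
  -- the loop
  set R : ℝ := 1/10 with hR
  set γ : ℝ → EuclideanSpace ℝ (Fin d) := fun s => Phi i0 i1 ((R:ℂ) * eloop s) with hγ
  have hγc : Continuous γ :=
    (phi_continuous i0 i1).comp (continuous_const.mul eloop_continuous)
  have hγloop : γ 0 = γ 1 := by rw [hγ]; simp [eloop_zero, eloop_one]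
  set K : Set (EuclideanSpace ℝ (Fin d)) := γ '' Icc 0 1 with hK
  have hKc : IsCompact K := isCompact_Icc.image hγc
  set G : ℝ → ℂ := fun s => (1/3 : ℂ) * (1 + Complex.exp (Complex.I * ((⟪γ s, U⟫ : ℝ) : ℂ))
    + Complex.exp (Complex.I * ((⟪γ s, V⟫ : ℝ) : ℂ))) with hG
  have hGeq : ∀ s : ℝ, (∫ z, Complex.exp (Complex.I * ((⟪γ s, z⟫ : ℝ) : ℂ)) ∂σ) = G s :=
    fun s => hg (γ s)
  have hGcont : Continuous G := by
    apply continuous_const.mul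
    apply Continuous.add
    apply Continuous.add continuous_const
    · exact Complex.continuous_exp.comp (continuous_const.mul
        (Complex.continuous_ofReal.comp (hγc.inner continuous_const)))
    · exact Complex.continuous_exp.comp (continuous_const.mul
        (Complex.continuous_ofReal.comp (hγc.inner continuous_const)))
  have hGloop : G 0 = G 1 := by rw [hG]; simp only [hγloop]
  have hGval : ∀ s : ℝ, (3:ℂ) * G s =
      1 + Complex.exp (Complex.I * ((2 * Real.pi / 3
          + (((R:ℂ) * eloop s).re + Real.sqrt 3 * ((R:ℂ) * eloop s).im) : ℝ) : ℂ))
        + Complex.exp (Complex.I * ((-(2 * Real.pi / 3)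
          + (-((R:ℂ) * eloop s).re + Real.sqrt 3 * ((R:ℂ) * eloop s).im) : ℝ) : ℂ)) := by
    intro s
    rw [hG]
    simp only []
    rw [hγ]
    simp only []
    rw [hU, hV, inner_phi_U i0 i1 hne, inner_phi_V i0 i1 hne]
    ring
  have hzabs : ∀ s : ℝ, ‖(R:ℂ) * eloop s‖ = 1/10 := by
    intro s
    have : ‖(R:ℂ) * eloop s‖ = 1/10 := by
      rw [norm_mul, eloop_norm, mul_one, Complex.norm_real, Real.norm_eq_abs, hR]
      norm_num
    simpa using this
  have hkey : ∀ s : ℝ, ‖(3:ℂ) * G s - -(Real.sqrt 3 : ℂ) * ((R:ℂ) * eloop s)‖ ≤ 6/100 := by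
    intro s
    rw [hGval s]
    have h := key_estimate ((R:ℂ) * eloop s) (by rw [hzabs s])
    rw [hzabs s] at h
    calc _ ≤ 6 * (1/10:ℝ)^2 := h
      _ = 6/100 := by norm_num
  have hψnorm : ∀ s : ℝ, ‖-(Real.sqrt 3 : ℂ) * ((R:ℂ) * eloop s)‖ = Real.sqrt 3 / 10 := by
    intro s
    rw [norm_mul, norm_mul, norm_neg, eloop_norm, mul_one, Complex.norm_real,
      Complex.norm_real, Real.norm_eq_abs, Real.norm_eq_abs,
      _root_.abs_of_nonneg (Real.sqrt_nonneg 3), hR,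
      show |(1:ℝ)/10| = 1/10 from _root_.abs_of_nonneg (by norm_num)]
    ring
  have hGlow : ∀ s : ℝ, 11/300 ≤ ‖G s‖ := by
    intro s
    have h1 : ‖-(Real.sqrt 3 : ℂ) * ((R:ℂ) * eloop s)‖ - ‖(3:ℂ) * G s‖ ≤
        ‖(3:ℂ) * G s - -(Real.sqrt 3 : ℂ) * ((R:ℂ) * eloop s)‖ := by
      rw [norm_sub_rev]
      exact norm_sub_norm_le _ _
    have h3 : ‖(3:ℂ) * G s‖ = 3 * ‖G s‖ := by
      rw [norm_mul]
      norm_num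
    have h4 := hψnorm s
    have h5 := hkey s
    rw [h3, h4] at h1
    linarith
  -- choose n
  have htu := hfu K hKc
  rw [Metric.tendstoUniformlyOn_iff] at htu
  obtain ⟨n, hn⟩ := (htu (7/200) (by norm_num)).exists
  have hclose1 : ∀ s ∈ Icc (0:ℝ) 1, ‖f n (γ s) - G s‖ < ‖G s‖ := by
    intro s hs
    have hx : γ s ∈ K := Set.mem_image_of_mem _ hs
    have h : dist (G s) (f n (γ s)) < 7/200 := by
      have hh := hn (γ s) hx
      simpa only [hGeq s] using hh
    have : ‖f n (γ s) - G s‖ < 7/200 := by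
      rw [← dist_eq_norm, dist_comm]
      exact h
    calc ‖f n (γ s) - G s‖ < 7/200 := this
      _ ≤ 11/300 := by norm_num
      _ ≤ ‖G s‖ := hGlow s
  have h1 : HasLoopLog (fun s => f n (γ s)) :=
    hasLoopLog_of_continuous_ne_zero (fun z => f n (Phi i0 i1 z))
      ((hfc n).comp (phi_continuous i0 i1)) (fun z => hf0 n _) R (by rw [hR]; norm_num)
  have h2 : HasLoopLog G :=
    (hasLoopLog_iff_of_close ((hfc n).comp hγc).continuousOn hGcont.continuousOn
      (congrArg (f n) hγloop) hGloop hclose1).1 h1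
  have h3 : HasLoopLog (fun s => (3:ℂ) * G s) := h2.const_mul (by norm_num)
  have hC : (-(Real.sqrt 3 : ℂ) * (R:ℂ)) ≠ 0 := by
    apply mul_ne_zero
    · simp only [ne_eq, neg_eq_zero, Complex.ofReal_eq_zero]
      exact ne_of_gt (Real.sqrt_pos.2 (by norm_num))
    · rw [hR]; norm_num
  have h4 : HasLoopLog (fun s => (-(Real.sqrt 3 : ℂ) * (R:ℂ)) * eloop s) := by
    refine (hasLoopLog_iff_of_close ((continuous_const.mul hGcont).continuousOn)
      ((continuous_const.mul eloop_continuous).continuousOn) ?_ ?_ ?_).1 h3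
    · simp only [Pi.mul_apply, hGloop]
    · simp [eloop_zero, eloop_one]
    · intro s hs
      have heq : (-(Real.sqrt 3 : ℂ) * (R:ℂ)) * eloop s
          = -(Real.sqrt 3 : ℂ) * ((R:ℂ) * eloop s) := by ring
      simp only [Pi.mul_apply]
      rw [heq, hψnorm s]
      calc ‖(3:ℂ) * G s - -(Real.sqrt 3 : ℂ) * ((R:ℂ) * eloop s)‖ ≤ 6/100 := hkey s
        _ < 17/100 := by norm_num
        _ ≤ Real.sqrt 3 / 10 := by linarith
  exact not_hasLoopLog_const_mul_eloop hC h4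
end
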